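/- Safety of the core Eff effect system (progress and preservation): if ⊢ c : A ! Δ holds for a closed computation c, then either c is of the form val e with ⊢ e : A, or c is an operation call ins#op(e; y. c') with ins#op ∈ Δ, or there exists c' with c ⤳ c' and ⊢ c' : A ! Δ. -/

import Mathlib

/-- Operations are pairs (instance, operation symbol). -/
abbrev Operation := ℕ × ℕ
/-- A dirt is a finite set of operations. -/
abbrev Dirt := Finset Operation
/-- A region is a finite set of instances. -/
abbrev Region := Finset ℕ

/-- Closed core Eff types: ground types, function types `A → (B ! Δ)`,
effect types `E^R` and handler types `(A ! Δ₁) ⇒ (B ! Δ₂)`. -/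
inductive Ty : Type where
  | bool : Ty
  | nat : Ty
  | unit : Ty
  | empty : Ty
  | fn : Ty → Ty → Dirt → Ty
  | eff : ℕ → Region → Ty
  | hand : Ty → Dirt → Ty → Dirt → Ty
  deriving DecidableEq

/-- Dirty types `A ! Δ`. -/
abbrev DirtyTy := Ty × Dirt

/-- Structural subtyping on core Eff types. -/
inductive SubTy : Ty → Ty → Prop where
  | bool : SubTy .bool .bool
  | nat : SubTy .nat .nat
  | unit : SubTy .unit .unit
  | empty : SubTy .empty .empty
  | fn {A A' B B' : Ty} {Δ Δ' : Dirt} :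
      SubTy A' A → SubTy B B' → Δ ⊆ Δ' → SubTy (.fn A B Δ) (.fn A' B' Δ')
  | eff {E : ℕ} {R R' : Region} : R ⊆ R' → SubTy (.eff E R) (.eff E R')
  | hand {A A' B B' : Ty} {Δ₁ Δ₁' Δ₂ Δ₂' : Dirt} :
      SubTy A' A → Δ₁' ⊆ Δ₁ → SubTy B B' → Δ₂ ⊆ Δ₂' →
      SubTy (.hand A Δ₁ B Δ₂) (.hand A' Δ₁' B' Δ₂')

/-- Subtyping of dirty types: `A ! Δ ≤ A' ! Δ'` iff `A ≤ A'` and `Δ ⊆ Δ'`. -/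
def SubD (C C' : DirtyTy) : Prop := SubTy C.1 C'.1 ∧ C.2 ⊆ C'.2
mutual
/-- Expressions of core Eff (de Bruijn representation). -/
inductive Expr : Type where
  | var : ℕ → Expr
  | tt : Expr
  | ff : Expr
  | zero : Expr
  | succ : Expr → Expr
  | unit : Expr
  | fn : Comp → Expr                    -- `fun x ↦ c`, binds one variable
  | inst : ℕ → Expr                     -- instance constant
  | handler : Comp → List OpCase → Expr -- value case (binds 1) and operation cases
/-- An operation case `e#op(x; k) ↦ c` of a handler; the body binds
the parameter `x` (de Bruijn index 1) and the continuation `k` (index 0). -/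
inductive OpCase : Type where
  | mk : Expr → ℕ → Comp → OpCase
/-- Computations of core Eff (de Bruijn representation). -/
inductive Comp : Type where
  | ite : Expr → Comp → Comp → Comp
  | iszero : Expr → Comp
  | pred : Expr → Comp
  | absurd : Expr → Comp
  | app : Expr → Expr → Comp
  | ret : Expr → Comp                      -- `val e`
  | call : Expr → ℕ → Expr → Comp → Comp   -- `e₁#op(e₂; y. c)`, `c` binds `y`
  | letin : Comp → Comp → Comp             -- `let x = c₁ in c₂`, `c₂` binds `x`
  | letval : Expr → Comp → Comp            -- `let val x = e in c`, `c` binds `x`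
  | letrec : Comp → Comp → Comp            -- `c₁` binds `x` (0) and `f` (1); `c₂` binds `f`
  | withhandle : Expr → Comp → Comp        -- `with e handle c`
end

/-- The operation symbol of an operation case. -/
def OpCase.opSym : OpCase → ℕ | .mk _ op _ => op
/-- The instance expression of an operation case. -/
def OpCase.instExpr : OpCase → Expr | .mk e _ _ => e
/-- The body of an operation case. -/
def OpCase.body : OpCase → Comp | .mk _ _ c => c

mutual
/-- Shift de Bruijn indices `≥ c` up by one in an expression. -/
def shiftE (c : ℕ) : Expr → Expr
  | .var n => if n < c then .var n else .var (n + 1)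
  | .tt => .tt
  | .ff => .ff
  | .zero => .zero
  | .succ e => .succ (shiftE c e)
  | .unit => .unit
  | .fn b => .fn (shiftC (c + 1) b)
  | .inst i => .inst i
  | .handler cv l => .handler (shiftC (c + 1) cv) (shiftCases c l)
/-- Shift an operation case. -/
def shiftCase (c : ℕ) : OpCase → OpCase
  | .mk e op b => .mk (shiftE c e) op (shiftC (c + 2) b)
/-- Shift a list of operation cases. -/
def shiftCases (c : ℕ) : List OpCase → List OpCase
  | [] => []
  | h :: t => shiftCase c h :: shiftCases c t
/-- Shift de Bruijn indices `≥ c` up by one in a computation. -/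
def shiftC (c : ℕ) : Comp → Comp
  | .ite e c₁ c₂ => .ite (shiftE c e) (shiftC c c₁) (shiftC c c₂)
  | .iszero e => .iszero (shiftE c e)
  | .pred e => .pred (shiftE c e)
  | .absurd e => .absurd (shiftE c e)
  | .app e₁ e₂ => .app (shiftE c e₁) (shiftE c e₂)
  | .ret e => .ret (shiftE c e)
  | .call e₁ op e₂ k => .call (shiftE c e₁) op (shiftE c e₂) (shiftC (c + 1) k)
  | .letin c₁ c₂ => .letin (shiftC c c₁) (shiftC (c + 1) c₂)
  | .letval e c₁ => .letval (shiftE c e) (shiftC (c + 1) c₁)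
  | .letrec c₁ c₂ => .letrec (shiftC (c + 2) c₁) (shiftC (c + 1) c₂)
  | .withhandle e c₁ => .withhandle (shiftE c e) (shiftC c c₁)
end

mutual
/-- Substitute `s` for de Bruijn index `k` in an expression. -/
def substE (k : ℕ) (s : Expr) : Expr → Expr
  | .var n => if n = k then s else if k < n then .var (n - 1) else .var n
  | .tt => .tt
  | .ff => .ff
  | .zero => .zero
  | .succ e => .succ (substE k s e)
  | .unit => .unit
  | .fn b => .fn (substC (k + 1) (shiftE 0 s) b)
  | .inst i => .inst i
  | .handler cv l => .handler (substC (k + 1) (shiftE 0 s) cv) (substCases k s l)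
/-- Substitute in an operation case. -/
def substCase (k : ℕ) (s : Expr) : OpCase → OpCase
  | .mk e op b => .mk (substE k s e) op (substC (k + 2) (shiftE 0 (shiftE 0 s)) b)
/-- Substitute in a list of operation cases. -/
def substCases (k : ℕ) (s : Expr) : List OpCase → List OpCase
  | [] => []
  | h :: t => substCase k s h :: substCases k s t
/-- Substitute `s` for de Bruijn index `k` in a computation. -/
def substC (k : ℕ) (s : Expr) : Comp → Comp
  | .ite e c₁ c₂ => .ite (substE k s e) (substC k s c₁) (substC k s c₂)
  | .iszero e => .iszero (substE k s e)
  | .pred e => .pred (substE k s e)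
  | .absurd e => .absurd (substE k s e)
  | .app e₁ e₂ => .app (substE k s e₁) (substE k s e₂)
  | .ret e => .ret (substE k s e)
  | .call e₁ op e₂ c =>
      .call (substE k s e₁) op (substE k s e₂) (substC (k + 1) (shiftE 0 s) c)
  | .letin c₁ c₂ => .letin (substC k s c₁) (substC (k + 1) (shiftE 0 s) c₂)
  | .letval e c => .letval (substE k s e) (substC (k + 1) (shiftE 0 s) c)
  | .letrec c₁ c₂ =>
      .letrec (substC (k + 2) (shiftE 0 (shiftE 0 s)) c₁) (substC (k + 1) (shiftE 0 s) c₂)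
  | .withhandle e c => .withhandle (substE k s e) (substC k s c)
end

/-- The small-step operational semantics of core Eff. -/
inductive Step : Comp → Comp → Prop where
  | ifTrue {c₁ c₂} : Step (.ite .tt c₁ c₂) c₁
  | ifFalse {c₁ c₂} : Step (.ite .ff c₁ c₂) c₂
  | iszeroZero : Step (.iszero .zero) (.ret .tt)
  | iszeroSucc {e} : Step (.iszero (.succ e)) (.ret .ff)
  | predZero : Step (.pred .zero) (.ret .zero)
  | predSucc {e} : Step (.pred (.succ e)) (.ret e)
  | beta {b e} : Step (.app (.fn b) e) (substC 0 e b)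
  | letStep {c₁ c₁' c₂} : Step c₁ c₁' → Step (.letin c₁ c₂) (.letin c₁' c₂)
  | letRet {e c} : Step (.letin (.ret e) c) (substC 0 e c)
  | letOp {e₁ op e₂ c₁ c₂} :
      Step (.letin (.call e₁ op e₂ c₁) c₂) (.call e₁ op e₂ (.letin c₁ (shiftC 1 c₂)))
  | letval {e c} : Step (.letval e c) (substC 0 e c)
  | letrec {c₁ c₂} :
      Step (.letrec c₁ c₂)
        (substC 0 (.fn (.letrec (shiftC 2 c₁) (substC 0 (.var 1) (shiftC 2 c₁)))) c₂)
  | withStep {e c c'} : Step c c' → Step (.withhandle e c) (.withhandle e c')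
  | withRet {cv cases e} :
      Step (.withhandle (.handler cv cases) (.ret e)) (substC 0 e cv)
  | withOpHandled {cv cases ins op cb e c} :
      OpCase.mk (.inst ins) op cb ∈ cases →
      Step (.withhandle (.handler cv cases) (.call (.inst ins) op e c))
        (substC 0 e
          (substC 0 (shiftE 0 (.fn (.withhandle (shiftE 0 (.handler cv cases)) c))) cb))
  | withOpSkip {cv cases ins op e c} :
      (∀ cb, OpCase.mk (.inst ins) op cb ∉ cases) →
      Step (.withhandle (.handler cv cases) (.call (.inst ins) op e c))
        (.call (.inst ins) op e (.withhandle (shiftE 0 (.handler cv cases)) c))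

/-- An effect signature: the effect of each instance, the effect of each operation
symbol, and parameter/result types of each operation symbol. -/
structure Sig where
  instEff : ℕ → ℕ
  opEff : ℕ → ℕ
  paramTy : ℕ → Ty
  resultTy : ℕ → Ty

/-- Ground (basic) types. -/
def Ground : Ty → Prop
  | .bool => True
  | .nat => True
  | .unit => True
  | .empty => True
  | _ => False

mutual
/-- The typing judgement `Γ ⊢ e : A` for expressions of core Eff. -/
inductive HasTypeE (S : Sig) : List Ty → Expr → Ty → Prop where
  | var {Γ n A} : Γ[n]? = some A → HasTypeE S Γ (.var n) A
  | tt {Γ} : HasTypeE S Γ .tt .bool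
  | ff {Γ} : HasTypeE S Γ .ff .bool
  | zero {Γ} : HasTypeE S Γ .zero .nat
  | succ {Γ e} : HasTypeE S Γ e .nat → HasTypeE S Γ (.succ e) .nat
  | unit {Γ} : HasTypeE S Γ .unit .unit
  | inst {Γ ins} {R : Region} :
      ins ∈ R → (∀ i ∈ R, S.instEff i = S.instEff ins) →
      HasTypeE S Γ (.inst ins) (.eff (S.instEff ins) R)
  | fn {Γ b A B Δ} : HasTypeC S (A :: Γ) b B Δ → HasTypeE S Γ (.fn b) (.fn A B Δ)
  | handler {Γ cv cases A Δ B Δ'} (Rs : ℕ → Region) :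
      HasTypeC S (A :: Γ) cv B Δ' →
      (∀ i (hi : i < cases.length),
        HasTypeE S Γ (cases.get ⟨i, hi⟩).instExpr
          (.eff (S.opEff (cases.get ⟨i, hi⟩).opSym) (Rs i))) →
      (∀ i (hi : i < cases.length),
        HasTypeC S
          (Ty.fn (S.resultTy (cases.get ⟨i, hi⟩).opSym) B Δ' ::
            S.paramTy (cases.get ⟨i, hi⟩).opSym :: Γ)
          (cases.get ⟨i, hi⟩).body B Δ') →
      (∀ p ∈ Δ,
        (∃ i, ∃ hi : i < cases.length,
          (cases.get ⟨i, hi⟩).opSym = p.2 ∧ Rs i = {p.1}) ∨ p ∈ Δ') →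
      HasTypeE S Γ (.handler cv cases) (.hand A Δ B Δ')
  | sub {Γ e A A'} : HasTypeE S Γ e A → SubTy A A' → HasTypeE S Γ e A'
/-- The typing judgement `Γ ⊢ c : A ! Δ` for computations of core Eff. -/
inductive HasTypeC (S : Sig) : List Ty → Comp → Ty → Dirt → Prop where
  | ite {Γ e c₁ c₂ A Δ} :
      HasTypeE S Γ e .bool → HasTypeC S Γ c₁ A Δ → HasTypeC S Γ c₂ A Δ →
      HasTypeC S Γ (.ite e c₁ c₂) A Δ
  | iszero {Γ e Δ} : HasTypeE S Γ e .nat → HasTypeC S Γ (.iszero e) .bool Δ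
  | pred {Γ e Δ} : HasTypeE S Γ e .nat → HasTypeC S Γ (.pred e) .nat Δ
  | absurd {Γ e A Δ} : HasTypeE S Γ e .empty → HasTypeC S Γ (.absurd e) A Δ
  | app {Γ e₁ e₂ A B Δ} :
      HasTypeE S Γ e₁ (.fn A B Δ) → HasTypeE S Γ e₂ A → HasTypeC S Γ (.app e₁ e₂) B Δ
  | ret {Γ e A Δ} : HasTypeE S Γ e A → HasTypeC S Γ (.ret e) A Δ
  | call {Γ e₁ op e₂ c A Δ} {R : Region} :
      HasTypeE S Γ e₁ (.eff (S.opEff op) R) →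
      HasTypeE S Γ e₂ (S.paramTy op) →
      HasTypeC S (S.resultTy op :: Γ) c A Δ →
      (∀ i ∈ R, (i, op) ∈ Δ) →
      HasTypeC S Γ (.call e₁ op e₂ c) A Δ
  | letin {Γ c₁ c₂ A B Δ} :
      HasTypeC S Γ c₁ A Δ → HasTypeC S (A :: Γ) c₂ B Δ →
      HasTypeC S Γ (.letin c₁ c₂) B Δ
  | letval {Γ e c A B Δ} :
      HasTypeE S Γ e A → HasTypeC S Γ (substC 0 e c) B Δ →
      HasTypeC S Γ (.letval e c) B Δ
  | letrec {Γ c₁ c₂ A B Δ B' Δ'} :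
      HasTypeC S (A :: Ty.fn A B Δ :: Γ) c₁ B Δ →
      HasTypeC S (Ty.fn A B Δ :: Γ) c₂ B' Δ' →
      HasTypeC S Γ (.letrec c₁ c₂) B' Δ'
  | withhandle {Γ e c A Δ B Δ'} :
      HasTypeE S Γ e (.hand A Δ B Δ') → HasTypeC S Γ c A Δ →
      HasTypeC S Γ (.withhandle e c) B Δ'
  | sub {Γ c A A' Δ Δ'} :
      HasTypeC S Γ c A Δ → SubTy A A' → Δ ⊆ Δ' → HasTypeC S Γ c A' Δ'
end

theorem SubTy.refl : ∀ A, SubTy A A := by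
  intro A
  induction A with
  | bool => exact .bool
  | nat => exact .nat
  | unit => exact .unit
  | empty => exact .empty
  | fn A B Δ ihA ihB => exact .fn ihA ihB subset_rfl
  | eff E R => exact .eff subset_rfl
  | hand A Δ₁ B Δ₂ ihA ihB => exact .hand ihA subset_rfl ihB subset_rfl

theorem SubTy.trans {A B C : Ty} (h1 : SubTy A B) (h2 : SubTy B C) : SubTy A C := by
  induction B generalizing A C with
  | bool => cases h1; exact h2
  | nat => cases h1; exact h2
  | unit => cases h1; exact h2
  | empty => cases h1; exact h2
  | fn B1 B2 Δ ih1 ih2 =>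
    cases h1 with | fn ha hb hd =>
    cases h2 with | fn ha' hb' hd' =>
    exact .fn (ih1 ha' ha) (ih2 hb hb') (hd.trans hd')
  | eff E R =>
    cases h1 with | eff h =>
    cases h2 with | eff h' =>
    exact .eff (h.trans h')
  | hand B1 Δ₁ B2 Δ₂ ih1 ih2 =>
    cases h1 with | hand ha hd1 hb hd2 =>
    cases h2 with | hand ha' hd1' hb' hd2' =>
    exact .hand (ih1 ha' ha) (hd1'.trans hd1) (ih2 hb hb') (hd2.trans hd2')

@[simp] theorem shiftCase_opSym (k : ℕ) (x : OpCase) : (shiftCase k x).opSym = x.opSym := by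
  cases x; simp [shiftCase, OpCase.opSym]
@[simp] theorem shiftCase_instExpr (k : ℕ) (x : OpCase) :
    (shiftCase k x).instExpr = shiftE k x.instExpr := by cases x; simp [shiftCase, OpCase.instExpr]
@[simp] theorem shiftCase_body (k : ℕ) (x : OpCase) :
    (shiftCase k x).body = shiftC (k + 2) x.body := by cases x; simp [shiftCase, OpCase.body]
@[simp] theorem substCase_opSym (k : ℕ) (s : Expr) (x : OpCase) :
    (substCase k s x).opSym = x.opSym := by cases x; simp [substCase, OpCase.opSym]
@[simp] theorem substCase_instExpr (k : ℕ) (s : Expr) (x : OpCase) :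
    (substCase k s x).instExpr = substE k s x.instExpr := by cases x; simp [substCase, OpCase.instExpr]
@[simp] theorem substCase_body (k : ℕ) (s : Expr) (x : OpCase) :
    (substCase k s x).body = substC (k + 2) (shiftE 0 (shiftE 0 s)) x.body := by cases x; simp [substCase, OpCase.body]

theorem shiftCases_eq_map (k : ℕ) : ∀ l : List OpCase, shiftCases k l = l.map (shiftCase k)
  | [] => by rw [shiftCases, List.map_nil]
  | h :: t => by rw [shiftCases, List.map_cons, shiftCases_eq_map]

theorem substCases_eq_map (k : ℕ) (s : Expr) :
    ∀ l : List OpCase, substCases k s l = l.map (substCase k s)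
  | [] => by rw [substCases, List.map_nil]
  | h :: t => by rw [substCases, List.map_cons, substCases_eq_map]

@[simp] theorem shiftCases_length (k : ℕ) (l : List OpCase) :
    (shiftCases k l).length = l.length := by rw [shiftCases_eq_map]; simp
@[simp] theorem substCases_length (k : ℕ) (s : Expr) (l : List OpCase) :
    (substCases k s l).length = l.length := by rw [substCases_eq_map]; simp

theorem shiftCases_get (k : ℕ) (l : List OpCase) (i : ℕ) (hi : i < (shiftCases k l).length)
    (hi' : i < l.length) :
    (shiftCases k l).get ⟨i, hi⟩ = shiftCase k (l.get ⟨i, hi'⟩) := by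
  simp [shiftCases_eq_map]
theorem substCases_get (k : ℕ) (s : Expr) (l : List OpCase) (i : ℕ)
    (hi : i < (substCases k s l).length) (hi' : i < l.length) :
    (substCases k s l).get ⟨i, hi⟩ = substCase k s (l.get ⟨i, hi'⟩) := by
  simp [substCases_eq_map]
mutual
theorem shiftE_shiftE (n m : ℕ) (h : n ≤ m) (e : Expr) :
    shiftE n (shiftE m e) = shiftE (m + 1) (shiftE n e) := by
  cases e with
  | var v =>
      simp only [shiftE]
      split_ifs <;> (try simp only [shiftE]) <;> (try split_ifs) <;>
        first | rfl | (simp only [Expr.var.injEq]; omega) | (exfalso; omega)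
  | tt => simp only [shiftE]
  | ff => simp only [shiftE]
  | zero => simp only [shiftE]
  | succ e => simp only [shiftE, shiftE_shiftE n m h e]
  | unit => simp only [shiftE]
  | fn b => simp only [shiftE, shiftC_shiftC (n+1) (m+1) (by omega) b]
  | inst i => simp only [shiftE]
  | handler cv l =>
      simp only [shiftE, shiftC_shiftC (n+1) (m+1) (by omega) cv,
        shiftCases_shiftCases n m h l]
theorem shiftCase_shiftCase (n m : ℕ) (h : n ≤ m) (x : OpCase) :
    shiftCase n (shiftCase m x) = shiftCase (m + 1) (shiftCase n x) := by
  cases x with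
  | mk e op b =>
      simp only [shiftCase, shiftE_shiftE n m h e, shiftC_shiftC (n+2) (m+2) (by omega) b]
theorem shiftCases_shiftCases (n m : ℕ) (h : n ≤ m) (l : List OpCase) :
    shiftCases n (shiftCases m l) = shiftCases (m + 1) (shiftCases n l) := by
  cases l with
  | nil => simp only [shiftCases]
  | cons x t =>
      simp only [shiftCases, shiftCase_shiftCase n m h x, shiftCases_shiftCases n m h t]
theorem shiftC_shiftC (n m : ℕ) (h : n ≤ m) (c : Comp) :
    shiftC n (shiftC m c) = shiftC (m + 1) (shiftC n c) := by
  cases c with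
  | ite e c₁ c₂ =>
      simp only [shiftC, shiftE_shiftE n m h e, shiftC_shiftC n m h c₁, shiftC_shiftC n m h c₂]
  | iszero e => simp only [shiftC, shiftE_shiftE n m h e]
  | pred e => simp only [shiftC, shiftE_shiftE n m h e]
  | absurd e => simp only [shiftC, shiftE_shiftE n m h e]
  | app e₁ e₂ => simp only [shiftC, shiftE_shiftE n m h e₁, shiftE_shiftE n m h e₂]
  | ret e => simp only [shiftC, shiftE_shiftE n m h e]
  | call e₁ op e₂ k =>
      simp only [shiftC, shiftE_shiftE n m h e₁, shiftE_shiftE n m h e₂,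
        shiftC_shiftC (n+1) (m+1) (by omega) k]
  | letin c₁ c₂ =>
      simp only [shiftC, shiftC_shiftC n m h c₁, shiftC_shiftC (n+1) (m+1) (by omega) c₂]
  | letval e c₁ =>
      simp only [shiftC, shiftE_shiftE n m h e, shiftC_shiftC (n+1) (m+1) (by omega) c₁]
  | letrec c₁ c₂ =>
      simp only [shiftC, shiftC_shiftC (n+2) (m+2) (by omega) c₁,
        shiftC_shiftC (n+1) (m+1) (by omega) c₂]
  | withhandle e c₁ => simp only [shiftC, shiftE_shiftE n m h e, shiftC_shiftC n m h c₁]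
end

theorem shift0_shift (n : ℕ) (s : Expr) :
    shiftE 0 (shiftE n s) = shiftE (n + 1) (shiftE 0 s) := shiftE_shiftE 0 n (Nat.zero_le n) s
theorem shift00_shift (n : ℕ) (s : Expr) :
    shiftE 0 (shiftE 0 (shiftE n s)) = shiftE (n + 2) (shiftE 0 (shiftE 0 s)) := by
  rw [shift0_shift n s, shift0_shift (n+1) (shiftE 0 s)]
mutual
theorem substE_shiftE (k : ℕ) (s e : Expr) : substE k s (shiftE k e) = e := by
  cases e with
  | var v =>
      simp only [shiftE]
      split_ifs <;> (try simp only [substE]) <;> (try split_ifs) <;>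
        first | rfl | (simp only [Expr.var.injEq]; omega) | (exfalso; omega)
  | tt => simp only [shiftE, substE]
  | ff => simp only [shiftE, substE]
  | zero => simp only [shiftE, substE]
  | succ e => simp only [shiftE, substE, substE_shiftE k s e]
  | unit => simp only [shiftE, substE]
  | fn b => simp only [shiftE, substE, substC_shiftC (k+1) (shiftE 0 s) b]
  | inst i => simp only [shiftE, substE]
  | handler cv l =>
      simp only [shiftE, substE, substC_shiftC (k+1) (shiftE 0 s) cv,
        substCases_shiftCases k s l]
theorem substCase_shiftCase (k : ℕ) (s : Expr) (x : OpCase) :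
    substCase k s (shiftCase k x) = x := by
  cases x with
  | mk e op b =>
      simp only [shiftCase, substCase, substE_shiftE k s e,
        substC_shiftC (k+2) (shiftE 0 (shiftE 0 s)) b]
theorem substCases_shiftCases (k : ℕ) (s : Expr) (l : List OpCase) :
    substCases k s (shiftCases k l) = l := by
  cases l with
  | nil => simp only [shiftCases, substCases]
  | cons x t =>
      simp only [shiftCases, substCases, substCase_shiftCase k s x,
        substCases_shiftCases k s t]
theorem substC_shiftC (k : ℕ) (s : Expr) (c : Comp) : substC k s (shiftC k c) = c := by
  cases c with
  | ite e c₁ c₂ =>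
      simp only [shiftC, substC, substE_shiftE k s e, substC_shiftC k s c₁, substC_shiftC k s c₂]
  | iszero e => simp only [shiftC, substC, substE_shiftE k s e]
  | pred e => simp only [shiftC, substC, substE_shiftE k s e]
  | absurd e => simp only [shiftC, substC, substE_shiftE k s e]
  | app e₁ e₂ => simp only [shiftC, substC, substE_shiftE k s e₁, substE_shiftE k s e₂]
  | ret e => simp only [shiftC, substC, substE_shiftE k s e]
  | call e₁ op e₂ kk =>
      simp only [shiftC, substC, substE_shiftE k s e₁, substE_shiftE k s e₂,
        substC_shiftC (k+1) (shiftE 0 s) kk]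
  | letin c₁ c₂ =>
      simp only [shiftC, substC, substC_shiftC k s c₁, substC_shiftC (k+1) (shiftE 0 s) c₂]
  | letval e c₁ =>
      simp only [shiftC, substC, substE_shiftE k s e, substC_shiftC (k+1) (shiftE 0 s) c₁]
  | letrec c₁ c₂ =>
      simp only [shiftC, substC, substC_shiftC (k+2) (shiftE 0 (shiftE 0 s)) c₁,
        substC_shiftC (k+1) (shiftE 0 s) c₂]
  | withhandle e c₁ => simp only [shiftC, substC, substE_shiftE k s e, substC_shiftC k s c₁]
end

mutual
theorem shiftE_substE (n k : ℕ) (h : n ≤ k) (s e : Expr) :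
    shiftE n (substE k s e) = substE (k + 1) (shiftE n s) (shiftE n e) := by
  cases e with
  | var v =>
      simp only [substE, shiftE]
      split_ifs <;> (try simp only [substE, shiftE]) <;> (try split_ifs) <;>
        first | rfl | (simp only [Expr.var.injEq]; omega) | (exfalso; omega)
  | tt => simp only [shiftE, substE]
  | ff => simp only [shiftE, substE]
  | zero => simp only [shiftE, substE]
  | succ e => simp only [shiftE, substE, shiftE_substE n k h s e]
  | unit => simp only [shiftE, substE]
  | fn b =>
      simp only [shiftE, substE, shiftC_substC (n+1) (k+1) (by omega) (shiftE 0 s) b,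
        ← shift0_shift]
      try rfl
  | inst i => simp only [shiftE, substE]
  | handler cv l =>
      simp only [shiftE, substE, shiftC_substC (n+1) (k+1) (by omega) (shiftE 0 s) cv,
        shiftCases_substCases n k h s l, ← shift0_shift]
      try rfl
theorem shiftCase_substCase (n k : ℕ) (h : n ≤ k) (s : Expr) (x : OpCase) :
    shiftCase n (substCase k s x) = substCase (k + 1) (shiftE n s) (shiftCase n x) := by
  cases x with
  | mk e op b =>
      simp only [shiftCase, substCase, shiftE_substE n k h s e,
        shiftC_substC (n+2) (k+2) (by omega) (shiftE 0 (shiftE 0 s)) b, ← shift00_shift]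
      try rfl
theorem shiftCases_substCases (n k : ℕ) (h : n ≤ k) (s : Expr) (l : List OpCase) :
    shiftCases n (substCases k s l) = substCases (k + 1) (shiftE n s) (shiftCases n l) := by
  cases l with
  | nil => simp only [shiftCases, substCases]
  | cons x t =>
      simp only [shiftCases, substCases, shiftCase_substCase n k h s x,
        shiftCases_substCases n k h s t]
theorem shiftC_substC (n k : ℕ) (h : n ≤ k) (s : Expr) (c : Comp) :
    shiftC n (substC k s c) = substC (k + 1) (shiftE n s) (shiftC n c) := by
  cases c with
  | ite e c₁ c₂ =>
      simp only [shiftC, substC, shiftE_substE n k h s e, shiftC_substC n k h s c₁,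
        shiftC_substC n k h s c₂]
  | iszero e => simp only [shiftC, substC, shiftE_substE n k h s e]
  | pred e => simp only [shiftC, substC, shiftE_substE n k h s e]
  | absurd e => simp only [shiftC, substC, shiftE_substE n k h s e]
  | app e₁ e₂ =>
      simp only [shiftC, substC, shiftE_substE n k h s e₁, shiftE_substE n k h s e₂]
  | ret e => simp only [shiftC, substC, shiftE_substE n k h s e]
  | call e₁ op e₂ kk =>
      simp only [shiftC, substC, shiftE_substE n k h s e₁, shiftE_substE n k h s e₂,
        shiftC_substC (n+1) (k+1) (by omega) (shiftE 0 s) kk, ← shift0_shift]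
      try rfl
  | letin c₁ c₂ =>
      simp only [shiftC, substC, shiftC_substC n k h s c₁,
        shiftC_substC (n+1) (k+1) (by omega) (shiftE 0 s) c₂, ← shift0_shift]
      try rfl
  | letval e c₁ =>
      simp only [shiftC, substC, shiftE_substE n k h s e,
        shiftC_substC (n+1) (k+1) (by omega) (shiftE 0 s) c₁, ← shift0_shift]
      try rfl
  | letrec c₁ c₂ =>
      simp only [shiftC, substC,
        shiftC_substC (n+2) (k+2) (by omega) (shiftE 0 (shiftE 0 s)) c₁,
        shiftC_substC (n+1) (k+1) (by omega) (shiftE 0 s) c₂, ← shift0_shift, ← shift00_shift]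
      try rfl
  | withhandle e c₁ =>
      simp only [shiftC, substC, shiftE_substE n k h s e, shiftC_substC n k h s c₁]
end

theorem shift0_subst (k : ℕ) (t s : Expr) :
    shiftE 0 (substE k t s) = substE (k + 1) (shiftE 0 t) (shiftE 0 s) :=
  shiftE_substE 0 k (Nat.zero_le k) t s
theorem shift00_subst (k : ℕ) (t s : Expr) :
    shiftE 0 (shiftE 0 (substE k t s)) =
      substE (k + 2) (shiftE 0 (shiftE 0 t)) (shiftE 0 (shiftE 0 s)) := by
  rw [shift0_subst k t s, shift0_subst (k+1) (shiftE 0 t) (shiftE 0 s)]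
mutual
theorem shiftE_substE' (k n : ℕ) (h : k ≤ n) (s e : Expr) :
    shiftE n (substE k s e) = substE k (shiftE n s) (shiftE (n + 1) e) := by
  cases e with
  | var v =>
      simp only [substE, shiftE]
      split_ifs <;> (try simp only [substE, shiftE]) <;> (try split_ifs) <;>
        first | rfl | (simp only [Expr.var.injEq]; omega) | (exfalso; omega)
  | tt => simp only [shiftE, substE]
  | ff => simp only [shiftE, substE]
  | zero => simp only [shiftE, substE]
  | succ e => simp only [shiftE, substE, shiftE_substE' k n h s e]
  | unit => simp only [shiftE, substE]
  | fn b =>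
      simp only [shiftE, substE, shiftC_substC' (k+1) (n+1) (by omega) (shiftE 0 s) b,
        ← shift0_shift]
      try rfl
  | inst i => simp only [shiftE, substE]
  | handler cv l =>
      simp only [shiftE, substE, shiftC_substC' (k+1) (n+1) (by omega) (shiftE 0 s) cv,
        shiftCases_substCases' k n h s l, ← shift0_shift]
      try rfl
theorem shiftCase_substCase' (k n : ℕ) (h : k ≤ n) (s : Expr) (x : OpCase) :
    shiftCase n (substCase k s x) = substCase k (shiftE n s) (shiftCase (n + 1) x) := by
  cases x with
  | mk e op b =>
      simp only [shiftCase, substCase, shiftE_substE' k n h s e,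
        shiftC_substC' (k+2) (n+2) (by omega) (shiftE 0 (shiftE 0 s)) b, ← shift00_shift]
      try rfl
theorem shiftCases_substCases' (k n : ℕ) (h : k ≤ n) (s : Expr) (l : List OpCase) :
    shiftCases n (substCases k s l) = substCases k (shiftE n s) (shiftCases (n + 1) l) := by
  cases l with
  | nil => simp only [shiftCases, substCases]
  | cons x t =>
      simp only [shiftCases, substCases, shiftCase_substCase' k n h s x,
        shiftCases_substCases' k n h s t]
theorem shiftC_substC' (k n : ℕ) (h : k ≤ n) (s : Expr) (c : Comp) :
    shiftC n (substC k s c) = substC k (shiftE n s) (shiftC (n + 1) c) := by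
  cases c with
  | ite e c₁ c₂ =>
      simp only [shiftC, substC, shiftE_substE' k n h s e, shiftC_substC' k n h s c₁,
        shiftC_substC' k n h s c₂]
  | iszero e => simp only [shiftC, substC, shiftE_substE' k n h s e]
  | pred e => simp only [shiftC, substC, shiftE_substE' k n h s e]
  | absurd e => simp only [shiftC, substC, shiftE_substE' k n h s e]
  | app e₁ e₂ =>
      simp only [shiftC, substC, shiftE_substE' k n h s e₁, shiftE_substE' k n h s e₂]
  | ret e => simp only [shiftC, substC, shiftE_substE' k n h s e]
  | call e₁ op e₂ kk =>
      simp only [shiftC, substC, shiftE_substE' k n h s e₁, shiftE_substE' k n h s e₂,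
        shiftC_substC' (k+1) (n+1) (by omega) (shiftE 0 s) kk, ← shift0_shift]
      try rfl
  | letin c₁ c₂ =>
      simp only [shiftC, substC, shiftC_substC' k n h s c₁,
        shiftC_substC' (k+1) (n+1) (by omega) (shiftE 0 s) c₂, ← shift0_shift]
      try rfl
  | letval e c₁ =>
      simp only [shiftC, substC, shiftE_substE' k n h s e,
        shiftC_substC' (k+1) (n+1) (by omega) (shiftE 0 s) c₁, ← shift0_shift]
      try rfl
  | letrec c₁ c₂ =>
      simp only [shiftC, substC,
        shiftC_substC' (k+2) (n+2) (by omega) (shiftE 0 (shiftE 0 s)) c₁,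
        shiftC_substC' (k+1) (n+1) (by omega) (shiftE 0 s) c₂, ← shift0_shift, ← shift00_shift]
      try rfl
  | withhandle e c₁ =>
      simp only [shiftC, substC, shiftE_substE' k n h s e, shiftC_substC' k n h s c₁]
end

mutual
theorem substE_substE (j k : ℕ) (h : j ≤ k) (t s e : Expr) :
    substE k t (substE j s e) = substE j (substE k t s) (substE (k + 1) (shiftE j t) e) := by
  cases e with
  | var v =>
      simp only [substE, shiftE]
      split_ifs <;> (try simp only [substE, shiftE]) <;> (try split_ifs) <;>
        first
          | rfl
          | (simp only [Expr.var.injEq]; omega)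
          | (exfalso; omega)
          | rw [substE_shiftE]
  | tt => simp only [substE]
  | ff => simp only [substE]
  | zero => simp only [substE]
  | succ e => simp only [substE, substE_substE j k h t s e]
  | unit => simp only [substE]
  | fn b =>
      simp only [substE, substC_substC (j+1) (k+1) (by omega) (shiftE 0 t) (shiftE 0 s) b,
        ← shift0_subst, ← shift0_shift]
      try rfl
  | inst i => simp only [substE]
  | handler cv l =>
      simp only [substE,
        substC_substC (j+1) (k+1) (by omega) (shiftE 0 t) (shiftE 0 s) cv,
        substCases_substCases j k h t s l, ← shift0_subst, ← shift0_shift]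
      try rfl
theorem substCase_substCase (j k : ℕ) (h : j ≤ k) (t s : Expr) (x : OpCase) :
    substCase k t (substCase j s x) =
      substCase j (substE k t s) (substCase (k + 1) (shiftE j t) x) := by
  cases x with
  | mk e op b =>
      simp only [substCase, substE_substE j k h t s e,
        substC_substC (j+2) (k+2) (by omega) (shiftE 0 (shiftE 0 t)) (shiftE 0 (shiftE 0 s)) b,
        ← shift00_subst, ← shift00_shift]
      try rfl
theorem substCases_substCases (j k : ℕ) (h : j ≤ k) (t s : Expr) (l : List OpCase) :
    substCases k t (substCases j s l) =
      substCases j (substE k t s) (substCases (k + 1) (shiftE j t) l) := by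
  cases l with
  | nil => simp only [substCases]
  | cons x t' =>
      simp only [substCases, substCase_substCase j k h t s x,
        substCases_substCases j k h t s t']
theorem substC_substC (j k : ℕ) (h : j ≤ k) (t s : Expr) (c : Comp) :
    substC k t (substC j s c) = substC j (substE k t s) (substC (k + 1) (shiftE j t) c) := by
  cases c with
  | ite e c₁ c₂ =>
      simp only [substC, substE_substE j k h t s e, substC_substC j k h t s c₁,
        substC_substC j k h t s c₂]
  | iszero e => simp only [substC, substE_substE j k h t s e]
  | pred e => simp only [substC, substE_substE j k h t s e]
  | absurd e => simp only [substC, substE_substE j k h t s e]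
  | app e₁ e₂ =>
      simp only [substC, substE_substE j k h t s e₁, substE_substE j k h t s e₂]
  | ret e => simp only [substC, substE_substE j k h t s e]
  | call e₁ op e₂ kk =>
      simp only [substC, substE_substE j k h t s e₁, substE_substE j k h t s e₂,
        substC_substC (j+1) (k+1) (by omega) (shiftE 0 t) (shiftE 0 s) kk,
        ← shift0_subst, ← shift0_shift]
      try rfl
  | letin c₁ c₂ =>
      simp only [substC, substC_substC j k h t s c₁,
        substC_substC (j+1) (k+1) (by omega) (shiftE 0 t) (shiftE 0 s) c₂,
        ← shift0_subst, ← shift0_shift]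
      try rfl
  | letval e c₁ =>
      simp only [substC, substE_substE j k h t s e,
        substC_substC (j+1) (k+1) (by omega) (shiftE 0 t) (shiftE 0 s) c₁,
        ← shift0_subst, ← shift0_shift]
      try rfl
  | letrec c₁ c₂ =>
      simp only [substC,
        substC_substC (j+2) (k+2) (by omega) (shiftE 0 (shiftE 0 t)) (shiftE 0 (shiftE 0 s)) c₁,
        substC_substC (j+1) (k+1) (by omega) (shiftE 0 t) (shiftE 0 s) c₂,
        ← shift00_subst, ← shift00_shift, ← shift0_subst, ← shift0_shift]
      try rfl
  | withhandle e c₁ =>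
      simp only [substC, substE_substE j k h t s e, substC_substC j k h t s c₁]
end
theorem typing_ind (S : Sig)
    (P : List Ty → Expr → Ty → Prop)
    (Q : List Ty → Comp → Ty → Dirt → Prop)
    (hvar : ∀ {Γ n A}, Γ[n]? = some A → P Γ (.var n) A)
    (htt : ∀ {Γ}, P Γ .tt .bool)
    (hff : ∀ {Γ}, P Γ .ff .bool)
    (hzero : ∀ {Γ}, P Γ .zero .nat)
    (hsucc : ∀ {Γ e}, HasTypeE S Γ e .nat → P Γ e .nat → P Γ (.succ e) .nat)
    (hunit : ∀ {Γ}, P Γ .unit .unit)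
    (hinst : ∀ {Γ ins} {R : Region}, ins ∈ R → (∀ i ∈ R, S.instEff i = S.instEff ins) →
      P Γ (.inst ins) (.eff (S.instEff ins) R))
    (hfn : ∀ {Γ b A B Δ}, HasTypeC S (A :: Γ) b B Δ → Q (A :: Γ) b B Δ →
      P Γ (.fn b) (.fn A B Δ))
    (hhandler : ∀ {Γ cv cases A Δ B Δ'} (Rs : ℕ → Region),
      HasTypeC S (A :: Γ) cv B Δ' →
      (∀ i (hi : i < cases.length),
        HasTypeE S Γ (cases.get ⟨i, hi⟩).instExpr
          (.eff (S.opEff (cases.get ⟨i, hi⟩).opSym) (Rs i))) →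
      (∀ i (hi : i < cases.length),
        HasTypeC S
          (Ty.fn (S.resultTy (cases.get ⟨i, hi⟩).opSym) B Δ' ::
            S.paramTy (cases.get ⟨i, hi⟩).opSym :: Γ)
          (cases.get ⟨i, hi⟩).body B Δ') →
      (∀ p ∈ Δ,
        (∃ i, ∃ hi : i < cases.length,
          (cases.get ⟨i, hi⟩).opSym = p.2 ∧ Rs i = {p.1}) ∨ p ∈ Δ') →
      Q (A :: Γ) cv B Δ' →
      (∀ i (hi : i < cases.length),
        P Γ (cases.get ⟨i, hi⟩).instExpr
          (.eff (S.opEff (cases.get ⟨i, hi⟩).opSym) (Rs i))) →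
      (∀ i (hi : i < cases.length),
        Q (Ty.fn (S.resultTy (cases.get ⟨i, hi⟩).opSym) B Δ' ::
            S.paramTy (cases.get ⟨i, hi⟩).opSym :: Γ)
          (cases.get ⟨i, hi⟩).body B Δ') →
      P Γ (.handler cv cases) (.hand A Δ B Δ'))
    (hsubE : ∀ {Γ e A A'}, HasTypeE S Γ e A → SubTy A A' → P Γ e A → P Γ e A')
    (hite : ∀ {Γ e c₁ c₂ A Δ}, HasTypeE S Γ e .bool → HasTypeC S Γ c₁ A Δ →
      HasTypeC S Γ c₂ A Δ → P Γ e .bool → Q Γ c₁ A Δ → Q Γ c₂ A Δ →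
      Q Γ (.ite e c₁ c₂) A Δ)
    (hiszero : ∀ {Γ e Δ}, HasTypeE S Γ e .nat → P Γ e .nat → Q Γ (.iszero e) .bool Δ)
    (hpred : ∀ {Γ e Δ}, HasTypeE S Γ e .nat → P Γ e .nat → Q Γ (.pred e) .nat Δ)
    (habsurd : ∀ {Γ e A Δ}, HasTypeE S Γ e .empty → P Γ e .empty → Q Γ (.absurd e) A Δ)
    (happ : ∀ {Γ e₁ e₂ A B Δ}, HasTypeE S Γ e₁ (.fn A B Δ) → HasTypeE S Γ e₂ A →
      P Γ e₁ (.fn A B Δ) → P Γ e₂ A → Q Γ (.app e₁ e₂) B Δ)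
    (hret : ∀ {Γ e A Δ}, HasTypeE S Γ e A → P Γ e A → Q Γ (.ret e) A Δ)
    (hcall : ∀ {Γ e₁ op e₂ c A Δ} {R : Region}, HasTypeE S Γ e₁ (.eff (S.opEff op) R) →
      HasTypeE S Γ e₂ (S.paramTy op) → HasTypeC S (S.resultTy op :: Γ) c A Δ →
      (∀ i ∈ R, (i, op) ∈ Δ) → P Γ e₁ (.eff (S.opEff op) R) → P Γ e₂ (S.paramTy op) →
      Q (S.resultTy op :: Γ) c A Δ → Q Γ (.call e₁ op e₂ c) A Δ)
    (hletin : ∀ {Γ c₁ c₂ A B Δ}, HasTypeC S Γ c₁ A Δ → HasTypeC S (A :: Γ) c₂ B Δ →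
      Q Γ c₁ A Δ → Q (A :: Γ) c₂ B Δ → Q Γ (.letin c₁ c₂) B Δ)
    (hletval : ∀ {Γ e c A B Δ}, HasTypeE S Γ e A → HasTypeC S Γ (substC 0 e c) B Δ →
      P Γ e A → Q Γ (substC 0 e c) B Δ → Q Γ (.letval e c) B Δ)
    (hletrec : ∀ {Γ c₁ c₂ A B Δ B' Δ'}, HasTypeC S (A :: .fn A B Δ :: Γ) c₁ B Δ →
      HasTypeC S (.fn A B Δ :: Γ) c₂ B' Δ' → Q (A :: .fn A B Δ :: Γ) c₁ B Δ →
      Q (.fn A B Δ :: Γ) c₂ B' Δ' → Q Γ (.letrec c₁ c₂) B' Δ')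
    (hwith : ∀ {Γ e c A Δ B Δ'}, HasTypeE S Γ e (.hand A Δ B Δ') → HasTypeC S Γ c A Δ →
      P Γ e (.hand A Δ B Δ') → Q Γ c A Δ → Q Γ (.withhandle e c) B Δ')
    (hsubC : ∀ {Γ c A A' Δ Δ'}, HasTypeC S Γ c A Δ → SubTy A A' → Δ ⊆ Δ' →
      Q Γ c A Δ → Q Γ c A' Δ') :
    (∀ {Γ e A}, HasTypeE S Γ e A → P Γ e A) ∧
      (∀ {Γ c A Δ}, HasTypeC S Γ c A Δ → Q Γ c A Δ) := by
  refine ⟨fun {Γ e A} h => ?_, fun {Γ c A Δ} h => ?_⟩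
  · exact HasTypeE.rec (motive_1 := fun Γ e A _ => P Γ e A)
      (motive_2 := fun Γ c A Δ _ => Q Γ c A Δ)
      (fun a => hvar a) (htt) (hff) (hzero) (fun a ih => hsucc a ih) (hunit)
      (fun a a1 => hinst a a1) (fun a ih => hfn a ih)
      (fun Rs a a1 a2 a3 ih ih1 ih2 => hhandler Rs a a1 a2 a3 ih ih1 ih2)
      (fun a a1 ih => hsubE a a1 ih)
      (fun a a1 a2 ih ih1 ih2 => hite a a1 a2 ih ih1 ih2)
      (fun a ih => hiszero a ih) (fun a ih => hpred a ih) (fun a ih => habsurd a ih)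
      (fun a a1 ih ih1 => happ a a1 ih ih1) (fun a ih => hret a ih)
      (fun a a1 a2 a3 ih ih1 ih2 => hcall a a1 a2 a3 ih ih1 ih2)
      (fun a a1 ih ih1 => hletin a a1 ih ih1)
      (fun a a1 ih ih1 => hletval a a1 ih ih1)
      (fun a a1 ih ih1 => hletrec a a1 ih ih1)
      (fun a a1 ih ih1 => hwith a a1 ih ih1)
      (fun a a1 a2 ih => hsubC a a1 a2 ih) h
  · exact HasTypeC.rec (motive_1 := fun Γ e A _ => P Γ e A)
      (motive_2 := fun Γ c A Δ _ => Q Γ c A Δ)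
      (fun a => hvar a) (htt) (hff) (hzero) (fun a ih => hsucc a ih) (hunit)
      (fun a a1 => hinst a a1) (fun a ih => hfn a ih)
      (fun Rs a a1 a2 a3 ih ih1 ih2 => hhandler Rs a a1 a2 a3 ih ih1 ih2)
      (fun a a1 ih => hsubE a a1 ih)
      (fun a a1 a2 ih ih1 ih2 => hite a a1 a2 ih ih1 ih2)
      (fun a ih => hiszero a ih) (fun a ih => hpred a ih) (fun a ih => habsurd a ih)
      (fun a a1 ih ih1 => happ a a1 ih ih1) (fun a ih => hret a ih)
      (fun a a1 a2 a3 ih ih1 ih2 => hcall a a1 a2 a3 ih ih1 ih2)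
      (fun a a1 ih ih1 => hletin a a1 ih ih1)
      (fun a a1 ih ih1 => hletval a a1 ih ih1)
      (fun a a1 ih ih1 => hletrec a a1 ih ih1)
      (fun a a1 ih ih1 => hwith a a1 ih ih1)
      (fun a a1 a2 ih => hsubC a a1 a2 ih) h

theorem get?_insert_lt {Γ₁ Γ₂ : List Ty} {T : Ty} {n : ℕ} (h : n < Γ₁.length) :
    (Γ₁ ++ T :: Γ₂)[n]? = (Γ₁ ++ Γ₂)[n]? := by
  rw [List.getElem?_append_left h, List.getElem?_append_left h]
theorem get?_insert_ge {Γ₁ Γ₂ : List Ty} {T : Ty} {n : ℕ} (h : Γ₁.length ≤ n) :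
    (Γ₁ ++ T :: Γ₂)[n + 1]? = (Γ₁ ++ Γ₂)[n]? := by
  rw [List.getElem?_append_right (by omega), List.getElem?_append_right h]
  have : n + 1 - Γ₁.length = (n - Γ₁.length) + 1 := by omega
  rw [this, List.getElem?_cons_succ]
theorem get?_mid (Γ₁ Γ₂ : List Ty) (U : Ty) :
    (Γ₁ ++ U :: Γ₂)[Γ₁.length]? = some U := by
  rw [List.getElem?_append_right le_rfl]
  simp
theorem get?_remove_gt {Γ₁ Γ₂ : List Ty} {U : Ty} {n : ℕ} (h : Γ₁.length < n) :
    (Γ₁ ++ Γ₂)[n - 1]? = (Γ₁ ++ U :: Γ₂)[n]? := by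
  rw [List.getElem?_append_right (by omega), List.getElem?_append_right (by omega)]
  have : n - Γ₁.length = (n - 1 - Γ₁.length) + 1 := by omega
  rw [this, List.getElem?_cons_succ]
theorem weaken (S : Sig) :
    (∀ {Γ e A}, HasTypeE S Γ e A → ∀ Γ₁ T Γ₂, Γ = Γ₁ ++ Γ₂ →
        HasTypeE S (Γ₁ ++ T :: Γ₂) (shiftE Γ₁.length e) A) ∧
    (∀ {Γ c A Δ}, HasTypeC S Γ c A Δ → ∀ Γ₁ T Γ₂, Γ = Γ₁ ++ Γ₂ →
        HasTypeC S (Γ₁ ++ T :: Γ₂) (shiftC Γ₁.length c) A Δ) := by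
  apply typing_ind S
    (fun Γ e A => ∀ Γ₁ T Γ₂, Γ = Γ₁ ++ Γ₂ →
        HasTypeE S (Γ₁ ++ T :: Γ₂) (shiftE Γ₁.length e) A)
    (fun Γ c A Δ => ∀ Γ₁ T Γ₂, Γ = Γ₁ ++ Γ₂ →
        HasTypeC S (Γ₁ ++ T :: Γ₂) (shiftC Γ₁.length c) A Δ)
  case hvar =>
    intro Γ n A h Γ₁ T Γ₂ heq
    subst heq
    simp only [shiftE]
    split_ifs with hn
    · exact .var (by rw [get?_insert_lt hn]; exact h)
    · exact .var (by rw [get?_insert_ge (by omega)]; exact h)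
  case htt => intro Γ Γ₁ T Γ₂ _; simp only [shiftE]; exact .tt
  case hff => intro Γ Γ₁ T Γ₂ _; simp only [shiftE]; exact .ff
  case hzero => intro Γ Γ₁ T Γ₂ _; simp only [shiftE]; exact .zero
  case hsucc =>
    intro Γ e _ ih Γ₁ T Γ₂ heq; simp only [shiftE]; exact .succ (ih Γ₁ T Γ₂ heq)
  case hunit => intro Γ Γ₁ T Γ₂ _; simp only [shiftE]; exact .unit
  case hinst =>
    intro Γ ins R h1 h2 Γ₁ T Γ₂ _; simp only [shiftE]; exact .inst h1 h2
  case hfn =>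
    intro Γ b A B Δ _ ih Γ₁ T Γ₂ heq
    simp only [shiftE]
    exact .fn (ih (A :: Γ₁) T Γ₂ (by simp [heq]))
  case hhandler =>
    intro Γ cv cases A Δ B Δ' Rs _ _ _ hcov ihcv ihinst ihbody Γ₁ T Γ₂ heq
    simp only [shiftE]
    refine HasTypeE.handler Rs (ihcv (A :: Γ₁) T Γ₂ (by simp [heq])) ?_ ?_ ?_
    · intro i hi
      have hi' : i < cases.length := by simpa using hi
      rw [shiftCases_get _ _ i hi hi']
      simp only [shiftCase_instExpr, shiftCase_opSym]
      exact ihinst i hi' Γ₁ T Γ₂ heq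
    · intro i hi
      have hi' : i < cases.length := by simpa using hi
      rw [shiftCases_get _ _ i hi hi']
      simp only [shiftCase_body, shiftCase_opSym]
      exact ihbody i hi'
        (Ty.fn (S.resultTy (cases.get ⟨i, hi'⟩).opSym) B Δ' ::
          S.paramTy (cases.get ⟨i, hi'⟩).opSym :: Γ₁) T Γ₂ (by simp [heq])
    · intro p hp
      rcases hcov p hp with ⟨i, hi, hsym, hR⟩ | hmem
      · left
        have hi2 : i < (shiftCases Γ₁.length cases).length := by simpa using hi
        refine ⟨i, hi2, ?_, hR⟩
        rw [shiftCases_get _ _ i hi2 hi, shiftCase_opSym]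
        exact hsym
      · right; exact hmem
  case hsubE =>
    intro Γ e A A' _ hAA' ih Γ₁ T Γ₂ heq
    exact .sub (ih Γ₁ T Γ₂ heq) hAA'
  case hite =>
    intro Γ e c₁ c₂ A Δ _ _ _ ihe ih1 ih2 Γ₁ T Γ₂ heq
    simp only [shiftC]
    exact .ite (ihe Γ₁ T Γ₂ heq) (ih1 Γ₁ T Γ₂ heq) (ih2 Γ₁ T Γ₂ heq)
  case hiszero =>
    intro Γ e Δ _ ih Γ₁ T Γ₂ heq; simp only [shiftC]; exact .iszero (ih Γ₁ T Γ₂ heq)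
  case hpred =>
    intro Γ e Δ _ ih Γ₁ T Γ₂ heq; simp only [shiftC]; exact .pred (ih Γ₁ T Γ₂ heq)
  case habsurd =>
    intro Γ e A Δ _ ih Γ₁ T Γ₂ heq; simp only [shiftC]; exact .absurd (ih Γ₁ T Γ₂ heq)
  case happ =>
    intro Γ e₁ e₂ A B Δ _ _ ih1 ih2 Γ₁ T Γ₂ heq
    simp only [shiftC]
    exact .app (ih1 Γ₁ T Γ₂ heq) (ih2 Γ₁ T Γ₂ heq)
  case hret =>
    intro Γ e A Δ _ ih Γ₁ T Γ₂ heq; simp only [shiftC]; exact .ret (ih Γ₁ T Γ₂ heq)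
  case hcall =>
    intro Γ e₁ op e₂ c A Δ R _ _ _ hside ih1 ih2 ih3 Γ₁ T Γ₂ heq
    simp only [shiftC]
    exact .call (ih1 Γ₁ T Γ₂ heq) (ih2 Γ₁ T Γ₂ heq)
      (ih3 (S.resultTy op :: Γ₁) T Γ₂ (by simp [heq])) hside
  case hletin =>
    intro Γ c₁ c₂ A B Δ _ _ ih1 ih2 Γ₁ T Γ₂ heq
    simp only [shiftC]
    exact .letin (ih1 Γ₁ T Γ₂ heq) (ih2 (A :: Γ₁) T Γ₂ (by simp [heq]))
  case hletval =>
    intro Γ e c A B Δ _ _ ihe ihs Γ₁ T Γ₂ heq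
    simp only [shiftC]
    refine HasTypeC.letval (ihe Γ₁ T Γ₂ heq) ?_
    have h2 := ihs Γ₁ T Γ₂ heq
    rwa [shiftC_substC' 0 Γ₁.length (Nat.zero_le _) e c] at h2
  case hletrec =>
    intro Γ c₁ c₂ A B Δ B' Δ' _ _ ih1 ih2 Γ₁ T Γ₂ heq
    simp only [shiftC]
    exact .letrec (ih1 (A :: Ty.fn A B Δ :: Γ₁) T Γ₂ (by simp [heq]))
      (ih2 (Ty.fn A B Δ :: Γ₁) T Γ₂ (by simp [heq]))
  case hwith =>
    intro Γ e c A Δ B Δ' _ _ ihe ihc Γ₁ T Γ₂ heq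
    simp only [shiftC]
    exact .withhandle (ihe Γ₁ T Γ₂ heq) (ihc Γ₁ T Γ₂ heq)
  case hsubC =>
    intro Γ c A A' Δ Δ' _ hAA' hΔ ih Γ₁ T Γ₂ heq
    exact .sub (ih Γ₁ T Γ₂ heq) hAA' hΔ

theorem weakenE0 {S : Sig} {Γ : List Ty} {T : Ty} {e : Expr} {A : Ty}
    (h : HasTypeE S Γ e A) : HasTypeE S (T :: Γ) (shiftE 0 e) A :=
  (weaken S).1 h [] T Γ rfl

theorem substT (S : Sig) :
    (∀ {Γ e A}, HasTypeE S Γ e A → ∀ Γ₁ U Γ₂ s, Γ = Γ₁ ++ U :: Γ₂ →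
        HasTypeE S (Γ₁ ++ Γ₂) s U → HasTypeE S (Γ₁ ++ Γ₂) (substE Γ₁.length s e) A) ∧
    (∀ {Γ c A Δ}, HasTypeC S Γ c A Δ → ∀ Γ₁ U Γ₂ s, Γ = Γ₁ ++ U :: Γ₂ →
        HasTypeE S (Γ₁ ++ Γ₂) s U → HasTypeC S (Γ₁ ++ Γ₂) (substC Γ₁.length s c) A Δ) := by
  apply typing_ind S
    (fun Γ e A => ∀ Γ₁ U Γ₂ s, Γ = Γ₁ ++ U :: Γ₂ →
        HasTypeE S (Γ₁ ++ Γ₂) s U → HasTypeE S (Γ₁ ++ Γ₂) (substE Γ₁.length s e) A)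
    (fun Γ c A Δ => ∀ Γ₁ U Γ₂ s, Γ = Γ₁ ++ U :: Γ₂ →
        HasTypeE S (Γ₁ ++ Γ₂) s U → HasTypeC S (Γ₁ ++ Γ₂) (substC Γ₁.length s c) A Δ)
  case hvar =>
    intro Γ n A h Γ₁ U Γ₂ s heq hs
    subst heq
    simp only [substE]
    split_ifs with h1 h2
    · subst h1
      have hU := get?_mid Γ₁ Γ₂ U
      rw [h] at hU
      obtain rfl : A = U := by injection hU
      exact hs
    · exact .var (by rw [get?_remove_gt h2]; exact h)
    · exact .var (((get?_insert_lt (T := U) (by omega)).symm).trans h)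
  case htt => intro Γ Γ₁ U Γ₂ s _ _; simp only [substE]; exact .tt
  case hff => intro Γ Γ₁ U Γ₂ s _ _; simp only [substE]; exact .ff
  case hzero => intro Γ Γ₁ U Γ₂ s _ _; simp only [substE]; exact .zero
  case hsucc =>
    intro Γ e _ ih Γ₁ U Γ₂ s heq hs
    simp only [substE]; exact .succ (ih Γ₁ U Γ₂ s heq hs)
  case hunit => intro Γ Γ₁ U Γ₂ s _ _; simp only [substE]; exact .unit
  case hinst =>
    intro Γ ins R h1 h2 Γ₁ U Γ₂ s _ _; simp only [substE]; exact .inst h1 h2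
  case hfn =>
    intro Γ b A B Δ _ ih Γ₁ U Γ₂ s heq hs
    simp only [substE]
    exact .fn (ih (A :: Γ₁) U Γ₂ (shiftE 0 s) (by simp [heq]) (weakenE0 hs))
  case hhandler =>
    intro Γ cv cases A Δ B Δ' Rs _ _ _ hcov ihcv ihinst ihbody Γ₁ U Γ₂ s heq hs
    simp only [substE]
    refine HasTypeE.handler Rs
      (ihcv (A :: Γ₁) U Γ₂ (shiftE 0 s) (by simp [heq]) (weakenE0 hs)) ?_ ?_ ?_
    · intro i hi
      have hi' : i < cases.length := by simpa using hi
      rw [substCases_get _ _ _ i hi hi']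
      simp only [substCase_instExpr, substCase_opSym]
      exact ihinst i hi' Γ₁ U Γ₂ s heq hs
    · intro i hi
      have hi' : i < cases.length := by simpa using hi
      rw [substCases_get _ _ _ i hi hi']
      simp only [substCase_body, substCase_opSym]
      exact ihbody i hi'
        (Ty.fn (S.resultTy (cases.get ⟨i, hi'⟩).opSym) B Δ' ::
          S.paramTy (cases.get ⟨i, hi'⟩).opSym :: Γ₁) U Γ₂ (shiftE 0 (shiftE 0 s))
        (by simp [heq]) (weakenE0 (weakenE0 hs))
    · intro p hp
      rcases hcov p hp with ⟨i, hi, hsym, hR⟩ | hmem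
      · left
        have hi2 : i < (substCases Γ₁.length s cases).length := by simpa using hi
        refine ⟨i, hi2, ?_, hR⟩
        rw [substCases_get _ _ _ i hi2 hi, substCase_opSym]
        exact hsym
      · right; exact hmem
  case hsubE =>
    intro Γ e A A' _ hAA' ih Γ₁ U Γ₂ s heq hs
    exact .sub (ih Γ₁ U Γ₂ s heq hs) hAA'
  case hite =>
    intro Γ e c₁ c₂ A Δ _ _ _ ihe ih1 ih2 Γ₁ U Γ₂ s heq hs
    simp only [substC]
    exact .ite (ihe Γ₁ U Γ₂ s heq hs) (ih1 Γ₁ U Γ₂ s heq hs) (ih2 Γ₁ U Γ₂ s heq hs)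
  case hiszero =>
    intro Γ e Δ _ ih Γ₁ U Γ₂ s heq hs
    simp only [substC]; exact .iszero (ih Γ₁ U Γ₂ s heq hs)
  case hpred =>
    intro Γ e Δ _ ih Γ₁ U Γ₂ s heq hs
    simp only [substC]; exact .pred (ih Γ₁ U Γ₂ s heq hs)
  case habsurd =>
    intro Γ e A Δ _ ih Γ₁ U Γ₂ s heq hs
    simp only [substC]; exact .absurd (ih Γ₁ U Γ₂ s heq hs)
  case happ =>
    intro Γ e₁ e₂ A B Δ _ _ ih1 ih2 Γ₁ U Γ₂ s heq hs
    simp only [substC]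
    exact .app (ih1 Γ₁ U Γ₂ s heq hs) (ih2 Γ₁ U Γ₂ s heq hs)
  case hret =>
    intro Γ e A Δ _ ih Γ₁ U Γ₂ s heq hs
    simp only [substC]; exact .ret (ih Γ₁ U Γ₂ s heq hs)
  case hcall =>
    intro Γ e₁ op e₂ c A Δ R _ _ _ hside ih1 ih2 ih3 Γ₁ U Γ₂ s heq hs
    simp only [substC]
    exact .call (ih1 Γ₁ U Γ₂ s heq hs) (ih2 Γ₁ U Γ₂ s heq hs)
      (ih3 (S.resultTy op :: Γ₁) U Γ₂ (shiftE 0 s) (by simp [heq]) (weakenE0 hs)) hside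
  case hletin =>
    intro Γ c₁ c₂ A B Δ _ _ ih1 ih2 Γ₁ U Γ₂ s heq hs
    simp only [substC]
    exact .letin (ih1 Γ₁ U Γ₂ s heq hs)
      (ih2 (A :: Γ₁) U Γ₂ (shiftE 0 s) (by simp [heq]) (weakenE0 hs))
  case hletval =>
    intro Γ e c A B Δ _ _ ihe ihs Γ₁ U Γ₂ s heq hs
    simp only [substC]
    refine HasTypeC.letval (ihe Γ₁ U Γ₂ s heq hs) ?_
    have h2 := ihs Γ₁ U Γ₂ s heq hs
    rwa [substC_substC 0 Γ₁.length (Nat.zero_le _) s e c] at h2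
  case hletrec =>
    intro Γ c₁ c₂ A B Δ B' Δ' _ _ ih1 ih2 Γ₁ U Γ₂ s heq hs
    simp only [substC]
    exact .letrec
      (ih1 (A :: Ty.fn A B Δ :: Γ₁) U Γ₂ (shiftE 0 (shiftE 0 s)) (by simp [heq])
        (weakenE0 (weakenE0 hs)))
      (ih2 (Ty.fn A B Δ :: Γ₁) U Γ₂ (shiftE 0 s) (by simp [heq]) (weakenE0 hs))
  case hwith =>
    intro Γ e c A Δ B Δ' _ _ ihe ihc Γ₁ U Γ₂ s heq hs
    simp only [substC]
    exact .withhandle (ihe Γ₁ U Γ₂ s heq hs) (ihc Γ₁ U Γ₂ s heq hs)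
  case hsubC =>
    intro Γ c A A' Δ Δ' _ hAA' hΔ ih Γ₁ U Γ₂ s heq hs
    exact .sub (ih Γ₁ U Γ₂ s heq hs) hAA' hΔ

theorem weakenC_at {S : Sig} {Γ₁ Γ₂ : List Ty} {T : Ty} {c : Comp} {A : Ty} {Δ : Dirt}
    (h : HasTypeC S (Γ₁ ++ Γ₂) c A Δ) :
    HasTypeC S (Γ₁ ++ T :: Γ₂) (shiftC Γ₁.length c) A Δ :=
  (weaken S).2 h Γ₁ T Γ₂ rfl

theorem substC0 {S : Sig} {Γ : List Ty} {U : Ty} {s : Expr} {c : Comp} {A : Ty} {Δ : Dirt}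
    (h : HasTypeC S (U :: Γ) c A Δ) (hs : HasTypeE S Γ s U) :
    HasTypeC S Γ (substC 0 s c) A Δ :=
  (substT S).2 h [] U Γ s rfl hs

theorem substC_at {S : Sig} {Γ₁ Γ₂ : List Ty} {U : Ty} {s : Expr} {c : Comp} {A : Ty}
    {Δ : Dirt} (h : HasTypeC S (Γ₁ ++ U :: Γ₂) c A Δ) (hs : HasTypeE S (Γ₁ ++ Γ₂) s U) :
    HasTypeC S (Γ₁ ++ Γ₂) (substC Γ₁.length s c) A Δ :=
  (substT S).2 h Γ₁ U Γ₂ s rfl hs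
/-- Inversion predicate for expression typing. -/
def InvE (S : Sig) (Γ : List Ty) : Expr → Ty → Prop
  | .var n, A => ∃ A₀, Γ[n]? = some A₀ ∧ SubTy A₀ A
  | .tt, A => SubTy .bool A
  | .ff, A => SubTy .bool A
  | .zero, A => SubTy .nat A
  | .succ e, A => HasTypeE S Γ e .nat ∧ SubTy .nat A
  | .unit, A => SubTy .unit A
  | .inst i, A => ∃ R : Region, i ∈ R ∧ SubTy (.eff (S.instEff i) R) A
  | .fn b, A => ∃ A₀ B₀ Δ₀, HasTypeC S (A₀ :: Γ) b B₀ Δ₀ ∧ SubTy (.fn A₀ B₀ Δ₀) A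
  | .handler cv cases, A => ∃ A₀ Δ₀ B₀ Δ₀',
      (∃ Rs : ℕ → Region,
        HasTypeC S (A₀ :: Γ) cv B₀ Δ₀' ∧
        (∀ i (hi : i < cases.length),
          HasTypeE S Γ (cases.get ⟨i, hi⟩).instExpr
            (.eff (S.opEff (cases.get ⟨i, hi⟩).opSym) (Rs i))) ∧
        (∀ i (hi : i < cases.length),
          HasTypeC S
            (Ty.fn (S.resultTy (cases.get ⟨i, hi⟩).opSym) B₀ Δ₀' ::
              S.paramTy (cases.get ⟨i, hi⟩).opSym :: Γ)
            (cases.get ⟨i, hi⟩).body B₀ Δ₀') ∧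
        (∀ p ∈ Δ₀,
          (∃ i, ∃ hi : i < cases.length,
            (cases.get ⟨i, hi⟩).opSym = p.2 ∧ Rs i = {p.1}) ∨ p ∈ Δ₀')) ∧
      SubTy (.hand A₀ Δ₀ B₀ Δ₀') A

theorem InvE.sub {S : Sig} {Γ : List Ty} {e : Expr} {A A' : Ty}
    (h : InvE S Γ e A) (hAA' : SubTy A A') : InvE S Γ e A' := by
  cases e with
  | var n => obtain ⟨A₀, h1, h2⟩ := h; exact ⟨A₀, h1, h2.trans hAA'⟩
  | tt => exact h.trans hAA'
  | ff => exact h.trans hAA'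
  | zero => exact h.trans hAA'
  | succ e => exact ⟨h.1, h.2.trans hAA'⟩
  | unit => exact h.trans hAA'
  | inst i => obtain ⟨R, h1, h2⟩ := h; exact ⟨R, h1, h2.trans hAA'⟩
  | fn b => obtain ⟨A₀, B₀, Δ₀, h1, h2⟩ := h; exact ⟨A₀, B₀, Δ₀, h1, h2.trans hAA'⟩
  | handler cv cases =>
      obtain ⟨A₀, Δ₀, B₀, Δ₀', h1, h2⟩ := h
      exact ⟨A₀, Δ₀, B₀, Δ₀', h1, h2.trans hAA'⟩

theorem expInv {S : Sig} {Γ : List Ty} {e : Expr} {A : Ty}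
    (h : HasTypeE S Γ e A) : InvE S Γ e A := by
  refine (typing_ind S (fun Γ e A => InvE S Γ e A) (fun _ _ _ _ => True)
    ?_ ?_ ?_ ?_ ?_ ?_ ?_ ?_ ?_ ?_ ?_ ?_ ?_ ?_ ?_ ?_ ?_ ?_ ?_ ?_ ?_ ?_).1 h
  · intro Γ n A h; exact ⟨A, h, SubTy.refl A⟩
  · intro Γ; exact SubTy.bool
  · intro Γ; exact SubTy.bool
  · intro Γ; exact SubTy.nat
  · intro Γ e he _; exact ⟨he, SubTy.nat⟩
  · intro Γ; exact SubTy.unit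
  · intro Γ ins R h1 _; exact ⟨R, h1, SubTy.refl _⟩
  · intro Γ b A B Δ hb _; exact ⟨A, B, Δ, hb, SubTy.refl _⟩
  · intro Γ cv cases A Δ B Δ' Rs h1 h2 h3 h4 _ _ _
    exact ⟨A, Δ, B, Δ', ⟨Rs, h1, h2, h3, h4⟩, SubTy.refl _⟩
  · intro Γ e A A' _ hAA' ih; exact ih.sub hAA'
  all_goals intros; trivial

/-- canonical forms in the empty context -/
theorem canonBool {S : Sig} {e : Expr} (h : HasTypeE S [] e .bool) :
    e = .tt ∨ e = .ff := by
  have h' := expInv h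
  cases e <;> simp only [InvE] at h'
  · obtain ⟨A₀, h1, _⟩ := h'; simp at h1
  · left; rfl
  · right; rfl
  · cases h'
  · cases h'.2
  · cases h'
  · obtain ⟨_, _, _, _, h2⟩ := h'; cases h2
  · obtain ⟨R, _, h2⟩ := h'; cases h2
  · obtain ⟨_, _, _, _, _, h2⟩ := h'; cases h2

theorem canonNat {S : Sig} {e : Expr} (h : HasTypeE S [] e .nat) :
    e = .zero ∨ ∃ e', e = .succ e' ∧ HasTypeE S [] e' .nat := by
  have h' := expInv h
  cases e <;> simp only [InvE] at h'
  · obtain ⟨A₀, h1, _⟩ := h'; simp at h1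
  · cases h'
  · cases h'
  · left; rfl
  · exact Or.inr ⟨_, rfl, h'.1⟩
  · cases h'
  · obtain ⟨_, _, _, _, h2⟩ := h'; cases h2
  · obtain ⟨R, _, h2⟩ := h'; cases h2
  · obtain ⟨_, _, _, _, _, h2⟩ := h'; cases h2

theorem canonEmpty {S : Sig} {e : Expr} (h : HasTypeE S [] e .empty) : False := by
  have h' := expInv h
  cases e <;> simp only [InvE] at h'
  · obtain ⟨A₀, h1, _⟩ := h'; simp at h1
  · cases h'
  · cases h'
  · cases h'
  · cases h'.2
  · cases h'
  · obtain ⟨_, _, _, _, h2⟩ := h'; cases h2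
  · obtain ⟨R, _, h2⟩ := h'; cases h2
  · obtain ⟨_, _, _, _, _, h2⟩ := h'; cases h2

theorem canonFn {S : Sig} {e : Expr} {A B : Ty} {Δ : Dirt}
    (h : HasTypeE S [] e (.fn A B Δ)) :
    ∃ b A₀ B₀ Δ₀, e = .fn b ∧ HasTypeC S [A₀] b B₀ Δ₀ ∧ SubTy A A₀ ∧ SubTy B₀ B ∧
      Δ₀ ⊆ Δ := by
  have h' := expInv h
  cases e <;> simp only [InvE] at h'
  · obtain ⟨A₀, h1, _⟩ := h'; simp at h1
  · cases h'
  · cases h'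
  · cases h'
  · cases h'.2
  · cases h'
  · obtain ⟨A₀, B₀, Δ₀, h1, h2⟩ := h'
    cases h2 with
    | fn ha hb hd => exact ⟨_, A₀, B₀, Δ₀, rfl, h1, ha, hb, hd⟩
  · obtain ⟨R, _, h2⟩ := h'; cases h2
  · obtain ⟨_, _, _, _, _, h2⟩ := h'; cases h2

theorem canonEff {S : Sig} {e : Expr} {E : ℕ} {R : Region}
    (h : HasTypeE S [] e (.eff E R)) :
    ∃ j, e = .inst j ∧ j ∈ R ∧ S.instEff j = E := by
  have h' := expInv h
  cases e <;> simp only [InvE] at h'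
  · obtain ⟨A₀, h1, _⟩ := h'; simp at h1
  · cases h'
  · cases h'
  · cases h'
  · cases h'.2
  · cases h'
  · obtain ⟨_, _, _, _, h2⟩ := h'; cases h2
  · obtain ⟨R₀, h1, h2⟩ := h'
    cases h2 with
    | eff hr => exact ⟨_, rfl, hr h1, rfl⟩
  · obtain ⟨_, _, _, _, _, h2⟩ := h'; cases h2

theorem canonHand {S : Sig} {e : Expr} {A : Ty} {Δ : Dirt} {B : Ty} {Δ' : Dirt}
    (h : HasTypeE S [] e (.hand A Δ B Δ')) :
    ∃ cv cases A₀ Δ₀ B₀ Δ₀',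
      e = .handler cv cases ∧
      (∃ Rs : ℕ → Region,
        HasTypeC S [A₀] cv B₀ Δ₀' ∧
        (∀ i (hi : i < cases.length),
          HasTypeE S [] (cases.get ⟨i, hi⟩).instExpr
            (.eff (S.opEff (cases.get ⟨i, hi⟩).opSym) (Rs i))) ∧
        (∀ i (hi : i < cases.length),
          HasTypeC S
            [Ty.fn (S.resultTy (cases.get ⟨i, hi⟩).opSym) B₀ Δ₀',
              S.paramTy (cases.get ⟨i, hi⟩).opSym]
            (cases.get ⟨i, hi⟩).body B₀ Δ₀') ∧
        (∀ p ∈ Δ₀,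
          (∃ i, ∃ hi : i < cases.length,
            (cases.get ⟨i, hi⟩).opSym = p.2 ∧ Rs i = {p.1}) ∨ p ∈ Δ₀')) ∧
      SubTy A A₀ ∧ Δ ⊆ Δ₀ ∧ SubTy B₀ B ∧ Δ₀' ⊆ Δ' := by
  have h' := expInv h
  cases e <;> simp only [InvE] at h'
  · obtain ⟨A₀, h1, _⟩ := h'; simp at h1
  · cases h'
  · cases h'
  · cases h'
  · cases h'.2
  · cases h'
  · obtain ⟨_, _, _, _, h2⟩ := h'; cases h2
  · obtain ⟨R₀, _, h2⟩ := h'; cases h2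
  · obtain ⟨A₀, Δ₀, B₀, Δ₀', h1, h2⟩ := h'
    cases h2 with
    | hand ha hd1 hb hd2 =>
      exact ⟨_, _, A₀, Δ₀, B₀, Δ₀', rfl, h1, ha, hd1, hb, hd2⟩

theorem callInv {S : Sig} {Γ : List Ty} {e₁ : Expr} {op : ℕ} {e₂ : Expr} {c : Comp}
    {A : Ty} {Δ : Dirt} (h : HasTypeC S Γ (.call e₁ op e₂ c) A Δ) :
    ∃ (R : Region) (A₀ : Ty) (Δ₀ : Dirt),
      HasTypeE S Γ e₁ (.eff (S.opEff op) R) ∧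
      HasTypeE S Γ e₂ (S.paramTy op) ∧
      HasTypeC S (S.resultTy op :: Γ) c A₀ Δ₀ ∧
      (∀ i ∈ R, (i, op) ∈ Δ₀) ∧ SubTy A₀ A ∧ Δ₀ ⊆ Δ := by
  have H := (typing_ind S (fun _ _ _ => True)
      (fun Γ c A Δ => ∀ f₁ fop f₂ fk, c = .call f₁ fop f₂ fk →
        ∃ (R : Region) (A₀ : Ty) (Δ₀ : Dirt),
          HasTypeE S Γ f₁ (.eff (S.opEff fop) R) ∧
          HasTypeE S Γ f₂ (S.paramTy fop) ∧
          HasTypeC S (S.resultTy fop :: Γ) fk A₀ Δ₀ ∧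
          (∀ i ∈ R, (i, fop) ∈ Δ₀) ∧ SubTy A₀ A ∧ Δ₀ ⊆ Δ)
      (hvar := by intros; trivial) (htt := by intros; trivial) (hff := by intros; trivial)
      (hzero := by intros; trivial) (hsucc := by intros; trivial)
      (hunit := by intros; trivial) (hinst := by intros; trivial)
      (hfn := by intros; trivial) (hhandler := by intros; trivial)
      (hsubE := by intros; trivial)
      (hite := by intros; rename_i heq; cases heq)
      (hiszero := by intros; rename_i heq; cases heq)
      (hpred := by intros; rename_i heq; cases heq)
      (habsurd := by intros; rename_i heq; cases heq)
      (happ := by intros; rename_i heq; cases heq)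
      (hret := by intros; rename_i heq; cases heq)
      (hcall := by
        intro Γ e₁' op' e₂' c' A' Δ' R h1 h2 h3 h4 _ _ _ f1 fop f2 fk heq
        cases heq
        exact ⟨R, A', Δ', h1, h2, h3, h4, SubTy.refl _, subset_rfl⟩)
      (hletin := by intros; rename_i heq; cases heq)
      (hletval := by intros; rename_i heq; cases heq)
      (hletrec := by intros; rename_i heq; cases heq)
      (hwith := by intros; rename_i heq; cases heq)
      (hsubC := by
        intro Γ c' A' A'' Δ' Δ'' hc hAA hΔ ih f1 fop f2 fk heq
        obtain ⟨R, A₀, Δ₀, g1, g2, g3, g4, g5, g6⟩ := ih f1 fop f2 fk heq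
        exact ⟨R, A₀, Δ₀, g1, g2, g3, g4, g5.trans hAA, fun x hx => hΔ (g6 hx)⟩)
      ).2 h
  exact H e₁ op e₂ c rfl
/-- Safety of the core Eff effect system (progress and preservation): a closed,
well-typed computation `⊢ c : A ! Δ` is either a returned value, an operation call
`ins#op(e; y.c')` with `ins#op ∈ Δ`, or it steps to a computation of the same type. -/
theorem safety (S : Sig)
    (hground : ∀ op, Ground (S.paramTy op) ∧ Ground (S.resultTy op))
    {c : Comp} {A : Ty} {Δ : Dirt} (h : HasTypeC S [] c A Δ) :
    (∃ e, c = .ret e ∧ HasTypeE S [] e A) ∨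
    (∃ ins op e c', c = .call (.inst ins) op e c' ∧ (ins, op) ∈ Δ) ∨
    (∃ c', Step c c' ∧ HasTypeC S [] c' A Δ) := by
  have H := (typing_ind S (fun _ _ _ => True)
      (fun Γ c A Δ => Γ = [] →
        (∃ e, c = .ret e ∧ HasTypeE S [] e A) ∨
        (∃ ins op e c', c = .call (.inst ins) op e c' ∧ (ins, op) ∈ Δ) ∨
        (∃ c', Step c c' ∧ HasTypeC S [] c' A Δ))
      (hvar := by intros; trivial) (htt := by intros; trivial)
      (hff := by intros; trivial) (hzero := by intros; trivial)
      (hsucc := by intros; trivial) (hunit := by intros; trivial)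
      (hinst := by intros; trivial) (hfn := by intros; trivial)
      (hhandler := by intros; trivial) (hsubE := by intros; trivial)
      (hite := by
        intro Γ e c₁ c₂ A Δ he h1 h2 _ _ _ hΓ
        subst hΓ
        rcases canonBool he with rfl | rfl
        · exact Or.inr (Or.inr ⟨c₁, .ifTrue, h1⟩)
        · exact Or.inr (Or.inr ⟨c₂, .ifFalse, h2⟩))
      (hiszero := by
        intro Γ e Δ he _ hΓ
        subst hΓ
        rcases canonNat he with rfl | ⟨e', rfl, he'⟩
        · exact Or.inr (Or.inr ⟨.ret .tt, .iszeroZero, .ret .tt⟩)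
        · exact Or.inr (Or.inr ⟨.ret .ff, .iszeroSucc, .ret .ff⟩))
      (hpred := by
        intro Γ e Δ he _ hΓ
        subst hΓ
        rcases canonNat he with rfl | ⟨e', rfl, he'⟩
        · exact Or.inr (Or.inr ⟨.ret .zero, .predZero, .ret .zero⟩)
        · exact Or.inr (Or.inr ⟨.ret e', .predSucc, .ret he'⟩))
      (habsurd := by
        intro Γ e A Δ he _ hΓ
        subst hΓ
        exact (canonEmpty he).elim)
      (happ := by
        intro Γ e₁ e₂ A B Δ h1 h2 _ _ hΓ
        subst hΓ
        obtain ⟨b, A₀, B₀, Δ₀, rfl, hb, hA, hB, hΔ⟩ := canonFn h1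
        refine Or.inr (Or.inr ⟨substC 0 e₂ b, .beta, ?_⟩)
        exact .sub (substC0 hb (.sub h2 hA)) hB hΔ)
      (hret := by
        intro Γ e A Δ he _ hΓ
        subst hΓ
        exact Or.inl ⟨e, rfl, he⟩)
      (hcall := by
        intro Γ e₁ op e₂ c A Δ R h1 h2 h3 h4 _ _ _ hΓ
        subst hΓ
        obtain ⟨ins, rfl, hins, hEff⟩ := canonEff h1
        exact Or.inr (Or.inl ⟨ins, op, e₂, c, rfl, h4 ins hins⟩))
      (hletin := by
        intro Γ c₁ c₂ A B Δ h1 h2 ih1 _ hΓ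
        subst hΓ
        rcases ih1 rfl with ⟨e, rfl, he⟩ | ⟨ins, op, e, c', rfl, hmem⟩ | ⟨c₁', hst, ht⟩
        · exact Or.inr (Or.inr ⟨substC 0 e c₂, .letRet, substC0 h2 he⟩)
        · obtain ⟨R, A₀, Δ₀, g1, g2, g3, g4, g5, g6⟩ := callInv h1
          refine Or.inr (Or.inr ⟨_, .letOp, ?_⟩)
          refine HasTypeC.call g1 g2 ?_ (fun i hi => g6 (g4 i hi))
          refine HasTypeC.letin (.sub g3 g5 g6) ?_
          exact (weaken S).2 h2 [A] (S.resultTy op) [] rfl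
        · exact Or.inr (Or.inr ⟨.letin c₁' c₂, .letStep hst, .letin ht h2⟩))
      (hletval := by
        intro Γ e c A B Δ he hsub _ _ hΓ
        subst hΓ
        exact Or.inr (Or.inr ⟨substC 0 e c, .letval, hsub⟩))
      (hletrec := by
        intro Γ c₁ c₂ A B Δ B' Δ' h1 h2 _ _ hΓ
        subst hΓ
        refine Or.inr (Or.inr ⟨_, .letrec, ?_⟩)
        have hs2 : HasTypeC S [A, Ty.fn A B Δ, A] (shiftC 2 c₁) B Δ :=
          (weaken S).2 h1 [A, Ty.fn A B Δ] A [] rfl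
        have hsub1 : HasTypeC S [Ty.fn A B Δ, A] (substC 0 (.var 1) (shiftC 2 c₁)) B Δ :=
          (substT S).2 hs2 [] A [Ty.fn A B Δ, A] (.var 1) rfl (.var rfl)
        have hF : HasTypeE S []
            (.fn (.letrec (shiftC 2 c₁) (substC 0 (.var 1) (shiftC 2 c₁)))) (.fn A B Δ) :=
          .fn (.letrec hs2 hsub1)
        exact substC0 h2 hF)
      (hwith := by
        intro Γ e c A Δ B Δ' he hc _ ihc hΓ
        subst hΓ
        obtain ⟨cv, cases, A₀, Δ₀, B₀, Δ₀', rfl, ⟨Rs, hcv, hinstT, hbody, hcov⟩,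
          hA, hΔ, hB, hΔ'⟩ := canonHand he
        rcases ihc rfl with ⟨e', rfl, he'⟩ | ⟨ins, op, ep, c', rfl, hmem⟩ | ⟨c'', hst, ht⟩
        · refine Or.inr (Or.inr ⟨substC 0 e' cv, .withRet, ?_⟩)
          exact .sub (substC0 hcv (.sub he' hA)) hB hΔ'
        · obtain ⟨R, A₁, Δ₁, g1, g2, g3, g4, g5, g6⟩ := callInv hc
          obtain ⟨j, hjeq, hjR, hEff⟩ := canonEff g1
          obtain rfl : ins = j := by injection hjeq
          have hmemΔ₀ : (ins, op) ∈ Δ₀ := hΔ (g6 (g4 ins hjR))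
          by_cases hex : ∃ cb, OpCase.mk (.inst ins) op cb ∈ cases
          · obtain ⟨cb, hcb⟩ := hex
            refine Or.inr (Or.inr ⟨_, .withOpHandled hcb, ?_⟩)
            obtain ⟨idx, hget⟩ := List.mem_iff_get.mp hcb
            have hb := hbody idx.1 idx.2
            have hget' : cases.get ⟨idx.1, idx.2⟩ = OpCase.mk (.inst ins) op cb := by
              simpa using hget
            rw [hget'] at hb
            simp only [OpCase.body, OpCase.opSym] at hb
            have hH : HasTypeE S [] (.handler cv cases) (.hand A₀ Δ₀ B₀ Δ₀') :=
              .handler Rs hcv hinstT hbody hcov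
            have hc' : HasTypeC S [S.resultTy op] c' A₀ Δ₀ :=
              .sub g3 (g5.trans hA) (fun x hx => hΔ (g6 hx))
            have hK : HasTypeE S []
                (.fn (.withhandle (shiftE 0 (.handler cv cases)) c'))
                (.fn (S.resultTy op) B₀ Δ₀') :=
              .fn (.withhandle (weakenE0 hH) hc')
            have hsub1 : HasTypeC S [S.paramTy op]
                (substC 0 (shiftE 0 (.fn (.withhandle (shiftE 0 (.handler cv cases)) c'))) cb)
                B₀ Δ₀' :=
              (substT S).2 hb [] (Ty.fn (S.resultTy op) B₀ Δ₀') [S.paramTy op]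
                _ rfl (weakenE0 hK)
            exact .sub (substC0 hsub1 g2) hB hΔ'
          · push_neg at hex
            refine Or.inr (Or.inr ⟨_, .withOpSkip (fun cb => hex cb), ?_⟩)
            have hmem' : (ins, op) ∈ Δ₀' := by
              rcases hcov (ins, op) hmemΔ₀ with ⟨i, hi, hsym, hRi⟩ | hm
              · exfalso
                have hinst_i := hinstT i hi
                rw [hRi] at hinst_i
                obtain ⟨j, hjeq2, hjmem, _⟩ := canonEff hinst_i
                obtain rfl : ins = j := (Finset.mem_singleton.mp hjmem).symm
                rcases hgc : cases.get ⟨i, hi⟩ with ⟨e0, op0, b0⟩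
                rw [hgc] at hjeq2 hsym
                simp only [OpCase.instExpr] at hjeq2
                simp only [OpCase.opSym] at hsym
                subst hjeq2
                have hmm : OpCase.mk (.inst ins) op b0 ∈ cases := by
                  rw [← hsym, ← hgc]
                  exact List.get_mem cases _
                exact hex b0 hmm
              · exact hm
            refine HasTypeC.call (R := ({ins} : Region)) ?_ g2 ?_ ?_
            · have hi1 : HasTypeE S [] (.inst ins) (.eff (S.instEff ins) ({ins} : Region)) :=
                .inst (Finset.mem_singleton_self ins) (fun i hi => by
                  rw [Finset.mem_singleton] at hi; rw [hi])
              rw [hEff] at hi1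
              exact hi1
            · exact .withhandle (weakenE0 he) (.sub g3 g5 g6)
            · intro i hi
              rw [Finset.mem_singleton] at hi
              subst hi
              exact hΔ' hmem'
        · exact Or.inr (Or.inr ⟨_, .withStep hst, .withhandle he ht⟩))
      (hsubC := by
        intro Γ c A A' Δ Δ' hc hAA hΔΔ ih hΓ
        subst hΓ
        rcases ih rfl with ⟨e, rfl, he⟩ | ⟨ins, op, ep, c', rfl, hm⟩ | ⟨c', hst, ht⟩
        · exact Or.inl ⟨e, rfl, .sub he hAA⟩
        · exact Or.inr (Or.inl ⟨ins, op, ep, c', rfl, hΔΔ hm⟩)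
        · exact Or.inr (Or.inr ⟨c', hst, .sub ht hAA hΔΔ⟩))
      ).2 h
  exact H rfl
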